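/- Let H be an N × N Hermitian matrix and let ρ_L(H) denote the maximum of the spectral radii of all L × L principal submatrices of H. Let λ be an eigenvalue of H with associated unit eigenvector v. If v is (L, η)-localized with η < 1, then |λ| ≤ (ρ_L(H) + √η ‖H‖) / √(1 − η), where ‖H‖ is the operator norm of H. -/

import Mathlib

open MeasureTheory Filter Topology ProbabilityTheory Matrix
open scoped Classical ENNReal

noncomputable section

/-- `L` is a slowly varying function. -/
def SlowlyVarying (L : ℝ → ℝ) : Prop :=
  ∀ s : ℝ, 0 < s → Filter.Tendsto (fun t => L (s * t) / L t) Filter.atTop (nhds 1)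

/-- The `l`-th largest value (1-indexed) of a finite family of reals. -/
def kthLargest {ι : Type*} [Fintype ι] (f : ι → ℝ) (l : ℕ) : ℝ :=
  ((Finset.univ.val.map f).sort (· ≤ ·)).getD
    (((Finset.univ.val.map f).sort (· ≤ ·)).length - l) 0

/-- The `l`-th largest eigenvalue (1-indexed) of a Hermitian matrix (`0` if not Hermitian). -/
def eigDesc {ι : Type*} [Fintype ι] [DecidableEq ι] (H : Matrix ι ι ℂ) (l : ℕ) : ℝ :=
  if hH : H.IsHermitian then kthLargest hH.eigenvalues l else 0

/-- Operator (spectral) norm of a complex matrix, w.r.t. Euclidean norms. -/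
def matOpNorm {m n : Type*} [Fintype m] [Fintype n] [DecidableEq n]
    (A : Matrix m n ℂ) : ℝ :=
  ‖LinearMap.toContinuousLinearMap (Matrix.toEuclideanLin A)‖

/-- The Euclidean (ℓ²) norm of a finitely supported complex vector. -/
def euclNorm {ι : Type*} [Fintype ι] (v : ι → ℂ) : ℝ :=
  Real.sqrt (∑ i, ‖v i‖ ^ 2)

/-- Convergence in probability of a sequence of real random variables to a constant. -/
def TendstoInProb {Ω : Type*} [MeasurableSpace Ω] (P : Measure Ω)
    (f : (n : ℕ) → Ω → ℝ) (c : ℝ) : Prop :=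
  ∀ ε : ℝ, 0 < ε →
    Filter.Tendsto (fun n => P {ω | ε < |f n ω - c|}) Filter.atTop (nhds 0)

/-- A sequence of events holds with exponentially high probability. -/
def WEHP {Ω : Type*} [MeasurableSpace Ω] (P : Measure Ω) (E : ℕ → Set Ω) : Prop :=
  ∃ C θ : ℝ, 0 < C ∧ 0 < θ ∧ ∃ n₀ : ℕ, ∀ n ≥ n₀,
    1 - ENNReal.ofReal (Real.exp (-C * (n : ℝ) ^ θ)) ≤ P (E n)

/-- A unit vector is `(L, η)`-localized if some coordinate set of cardinality `L`
carries more than `1 - η` of its squared mass. -/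
def IsLocalized {ι : Type*} [Fintype ι] (v : ι → ℂ) (L : ℕ) (η : ℝ) : Prop :=
  ∃ S : Finset ι, S.card = L ∧ 1 - η < ∑ j ∈ S, ‖v j‖ ^ 2

/-- The scaling constant `c_{np} = inf { t : P(|x·y| > t) ≤ 1/(p n^μ) }`,
using `P(|x·y(n)| > t) = n^(μ-1) L(t) t^(-α)`. -/
def cnp (α μ : ℝ) (L : ℝ → ℝ) (p : ℕ → ℕ) (n : ℕ) : ℝ :=
  sInf {t : ℝ | 0 < t ∧ (n : ℝ) ^ (μ - 1) * (L t * t ^ (-α)) ≤ 1 / ((p n : ℝ) * (n : ℝ) ^ μ)}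

/-- The Poisson probability mass function with mean `m`. -/
def poissonPMF (m : ℝ) (c : ℕ) : ℝ :=
  Real.exp (-m) * m ^ c / (Nat.factorial c)

/-- The Marchenko–Pastur law with ratio `ρ`. -/
def mpLaw (ρ : ℝ) : Measure ℝ :=
  MeasureTheory.volume.withDensity fun t => ENNReal.ofReal
    (if (1 - Real.sqrt ρ) ^ 2 ≤ t ∧ t ≤ (1 + Real.sqrt ρ) ^ 2 then
      Real.sqrt (((1 + Real.sqrt ρ) ^ 2 - t) * (t - (1 - Real.sqrt ρ) ^ 2)) /
        (2 * Real.pi * ρ * t)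
     else 0)

/-- Spectral radius of a Hermitian matrix (`0` if not Hermitian). -/
def specRad {ι : Type*} [Fintype ι] [DecidableEq ι] (A : Matrix ι ι ℂ) : ℝ :=
  if hA : A.IsHermitian then ⨆ i, |hA.eigenvalues i| else 0

/-- `ρ_L(H)`: the maximal spectral radius among `L × L` principal submatrices of `H`. -/
def rhoL {N : ℕ} (H : Matrix (Fin N) (Fin N) ℂ) (L : ℕ) : ℝ :=
  sSup {r | ∃ S : Finset (Fin N), S.card = L ∧
    r = specRad (H.submatrix (fun a : {i // i ∈ S} => (a : Fin N))
      (fun a : {i // i ∈ S} => (a : Fin N)))}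


lemma euclNorm_eq_norm {ι : Type*} [Fintype ι] (u : ι → ℂ) :
    euclNorm u = ‖(WithLp.equiv 2 (ι → ℂ)).symm u‖ := by
  rw [EuclideanSpace.norm_eq]; rfl

lemma specRad_nonneg {ι : Type*} [Fintype ι] [DecidableEq ι] (A : Matrix ι ι ℂ) :
    0 ≤ specRad A := by
  unfold specRad
  split
  · exact Real.iSup_nonneg fun i => abs_nonneg _
  · exact le_refl 0

lemma herm_mulVec_norm_le {ι : Type*} [Fintype ι] [DecidableEq ι] {A : Matrix ι ι ℂ}
    (hA : A.IsHermitian) (w : ι → ℂ) :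
    euclNorm (A.mulVec w) ≤ specRad A * euclNorm w := by
  classical
  set B := hA.eigenvectorBasis with hB
  set x : EuclideanSpace ℂ ι := (WithLp.equiv 2 (ι → ℂ)).symm w with hx
  have hsym : (Matrix.toEuclideanLin A).IsSymmetric :=
    (Matrix.isHermitian_iff_isSymmetric).1 hA
  have hTB : ∀ i, Matrix.toEuclideanLin A (B i) = (hA.eigenvalues i : ℂ) • B i := by
    intro i
    have h1 := hA.mulVec_eigenvectorBasis i
    ext j
    have := congrFun h1 j
    simpa [Matrix.toEuclideanLin_apply, Complex.real_smul] using this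
  have hrepr : ∀ i, B.repr (Matrix.toEuclideanLin A x) i
      = (hA.eigenvalues i : ℂ) * B.repr x i := by
    intro i
    rw [B.repr_apply_apply, B.repr_apply_apply, ← hsym (B i) x, hTB i,
      inner_smul_left]
    simp
  have hnorm1 : euclNorm (A.mulVec w) = ‖Matrix.toEuclideanLin A x‖ := by
    rw [euclNorm_eq_norm]
    congr 1
  have hnormw : euclNorm w = ‖x‖ := by rw [euclNorm_eq_norm]
  rw [hnorm1, hnormw, ← B.repr.norm_map (Matrix.toEuclideanLin A x), ← B.repr.norm_map x]
  rw [EuclideanSpace.norm_eq, EuclideanSpace.norm_eq]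
  rw [← Real.sqrt_sq (specRad_nonneg A), ← Real.sqrt_mul (sq_nonneg _)]
  apply Real.sqrt_le_sqrt
  rw [Finset.mul_sum]
  apply Finset.sum_le_sum
  intro i _
  rw [hrepr i]
  have hle : |hA.eigenvalues i| ≤ specRad A := by
    rw [specRad, dif_pos hA]
    exact le_ciSup (f := fun j => |hA.eigenvalues j|) (Set.finite_range _).bddAbove i
  have : ‖(hA.eigenvalues i : ℂ) * B.repr x i‖ ^ 2
      = |hA.eigenvalues i| ^ 2 * ‖B.repr x i‖ ^ 2 := by
    rw [norm_mul, mul_pow, Complex.norm_real, Real.norm_eq_abs]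
  rw [this]
  have h2 : |hA.eigenvalues i| ^ 2 ≤ specRad A ^ 2 :=
    pow_le_pow_left₀ (abs_nonneg _) hle 2
  exact mul_le_mul_of_nonneg_right h2 (sq_nonneg _)

lemma euclNorm_add_le {ι : Type*} [Fintype ι] (u w : ι → ℂ) :
    euclNorm (u + w) ≤ euclNorm u + euclNorm w := by
  rw [euclNorm_eq_norm, euclNorm_eq_norm, euclNorm_eq_norm]
  exact norm_add_le ((WithLp.equiv 2 (ι → ℂ)).symm u) ((WithLp.equiv 2 (ι → ℂ)).symm w)

lemma euclNorm_smul {ι : Type*} [Fintype ι] (c : ℂ) (u : ι → ℂ) :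
    euclNorm (c • u) = ‖c‖ * euclNorm u := by
  rw [euclNorm_eq_norm, euclNorm_eq_norm]
  exact norm_smul c ((WithLp.equiv 2 (ι → ℂ)).symm u)

lemma euclNorm_mulVec_le {m n : Type*} [Fintype m] [Fintype n] [DecidableEq n]
    (A : Matrix m n ℂ) (u : n → ℂ) :
    euclNorm (A.mulVec u) ≤ matOpNorm A * euclNorm u := by
  rw [euclNorm_eq_norm, euclNorm_eq_norm, matOpNorm]
  have := (LinearMap.toContinuousLinearMap (Matrix.toEuclideanLin A)).le_opNorm
    ((WithLp.equiv 2 (n → ℂ)).symm u)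
  simpa using this


/-- localized eigenvectors force small eigenvalues (Lemma 4.2 of BGP). -/
theorem stmt15
    {N : ℕ} (H : Matrix (Fin N) (Fin N) ℂ) (hH : H.IsHermitian)
    (Lc : ℕ) (η : ℝ) (hη0 : 0 < η) (hη1 : η < 1)
    (lam : ℝ) (v : Fin N → ℂ) (hv : euclNorm v = 1)
    (heig : H.mulVec v = (lam : ℂ) • v)
    (hloc : IsLocalized v Lc η) :
    |lam| ≤ (rhoL H Lc + Real.sqrt η * matOpNorm H) / Real.sqrt (1 - η) := by
  classical
  obtain ⟨S, hScard, hSmass⟩ := hloc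
  set P : (Fin N → ℂ) → (Fin N → ℂ) := fun u i => if i ∈ S then u i else 0 with hP
  have hsum1 : ∑ i, ‖v i‖ ^ 2 = 1 := by
    have h0 : 0 ≤ ∑ i, ‖v i‖ ^ 2 := Finset.sum_nonneg fun i _ => sq_nonneg _
    have := hv
    rw [euclNorm, Real.sqrt_eq_one] at this
    exact this
  set sS := ∑ i ∈ S, ‖v i‖ ^ 2 with hsS
  have hsS_le : sS ≤ 1 := by
    rw [← hsum1]
    exact Finset.sum_le_sum_of_subset_of_nonneg (Finset.subset_univ S)
      (fun i _ _ => sq_nonneg _)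
  have hPnorm : ∀ u : Fin N → ℂ, euclNorm (P u) = Real.sqrt (∑ i ∈ S, ‖u i‖ ^ 2) := by
    intro u
    rw [euclNorm]
    congr 1
    simp only [hP, apply_ite (fun z : ℂ => ‖z‖ ^ 2), norm_zero]
    rw [show ((0:ℝ) ^ 2 = 0) by ring]
    rw [Finset.sum_ite_mem, Finset.univ_inter]
  have hPle : ∀ u : Fin N → ℂ, euclNorm (P u) ≤ euclNorm u := by
    intro u
    rw [hPnorm, euclNorm]
    apply Real.sqrt_le_sqrt
    exact Finset.sum_le_sum_of_subset_of_nonneg (Finset.subset_univ S)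
      (fun i _ _ => sq_nonneg _)
  -- submatrix
  set A : Matrix {i // i ∈ S} {i // i ∈ S} ℂ :=
    H.submatrix (fun a : {i // i ∈ S} => (a : Fin N))
      (fun a : {i // i ∈ S} => (a : Fin N)) with hA
  have hAH : A.IsHermitian := hH.submatrix _
  set w : {i // i ∈ S} → ℂ := fun a => v a with hw
  have happ : ∀ a : {i // i ∈ S}, (A.mulVec w) a = (H.mulVec (P v)) (a : Fin N) := by
    intro a
    simp only [hA, hw, hP, Matrix.mulVec, dotProduct, Matrix.submatrix_apply]
    rw [show (∑ j, H (a : Fin N) j * (if j ∈ S then v j else 0))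
        = ∑ j ∈ S, H (a : Fin N) j * v j by
      simp [mul_ite, Finset.sum_ite_mem]]
    exact Finset.sum_coe_sort S fun j => H (a : Fin N) j * v j
  have e1 : euclNorm (P (H.mulVec (P v))) = euclNorm (A.mulVec w) := by
    rw [hPnorm, euclNorm]
    congr 1
    rw [← Finset.sum_coe_sort S (fun i => ‖(H.mulVec (P v)) i‖ ^ 2)]
    exact Finset.sum_congr rfl fun a _ => by rw [happ a]
  have e2 : euclNorm w = Real.sqrt sS := by
    rw [euclNorm, hsS]
    congr 1
    exact Finset.sum_coe_sort S fun i => ‖v i‖ ^ 2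
  -- specRad A ≤ rhoL
  have hbdd : BddAbove {r | ∃ T : Finset (Fin N), T.card = Lc ∧
      r = specRad (H.submatrix (fun a : {i // i ∈ T} => (a : Fin N))
        (fun a : {i // i ∈ T} => (a : Fin N)))} := by
    apply Set.Finite.bddAbove
    apply Set.Finite.subset (Set.finite_range
      (fun T : Finset (Fin N) => specRad (H.submatrix (fun a : {i // i ∈ T} => (a : Fin N))
        (fun a : {i // i ∈ T} => (a : Fin N)))))
    rintro r ⟨T, _, rfl⟩
    exact ⟨T, rfl⟩
  have hA_le : specRad A ≤ rhoL H Lc := le_csSup hbdd ⟨S, hScard, rfl⟩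
  have hrho_nonneg : 0 ≤ rhoL H Lc := le_trans (specRad_nonneg A) hA_le
  -- tail bound
  have hb : euclNorm (v - P v) ≤ Real.sqrt η := by
    have hsum : ∑ i, ‖(v - P v) i‖ ^ 2 = 1 - sS := by
      have hpt : ∀ i, ‖(v - P v) i‖ ^ 2 = ‖v i‖ ^ 2 - (if i ∈ S then ‖v i‖ ^ 2 else 0) := by
        intro i; by_cases h : i ∈ S <;> simp [hP, h]
      rw [Finset.sum_congr rfl (fun i _ => hpt i), Finset.sum_sub_distrib, hsum1,
        Finset.sum_ite_mem, Finset.univ_inter]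
    rw [euclNorm, hsum]
    exact Real.sqrt_le_sqrt (by linarith)
  -- identity
  have hid : (fun i => (lam : ℂ) * P v i) = P (H.mulVec v) := by
    funext i
    by_cases h : i ∈ S <;> simp [hP, h, heig]
  have hdec : P (H.mulVec v) = P (H.mulVec (P v)) + P (H.mulVec (v - P v)) := by
    have hmv : H.mulVec v = H.mulVec (P v) + H.mulVec (v - P v) := by
      rw [← Matrix.mulVec_add, add_sub_cancel]
    rw [hmv]
    funext i
    by_cases h : i ∈ S <;> simp [hP, h]
  have h1η : (0 : ℝ) < 1 - η := by linarith
  have hopnn : 0 ≤ matOpNorm H := norm_nonneg _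
  have hchain : |lam| * Real.sqrt (1 - η) ≤ rhoL H Lc + Real.sqrt η * matOpNorm H := by
    have c1 : |lam| * Real.sqrt (1 - η) ≤ |lam| * Real.sqrt sS :=
      mul_le_mul_of_nonneg_left (Real.sqrt_le_sqrt (le_of_lt hSmass)) (abs_nonneg _)
    have c2 : |lam| * Real.sqrt sS = euclNorm ((lam : ℂ) • P v) := by
      rw [euclNorm_smul, Complex.norm_real, Real.norm_eq_abs, hPnorm]
    have c2' : (lam : ℂ) • P v = P (H.mulVec v) := by
      funext i
      exact congrFun hid i
    have c3 : euclNorm (P (H.mulVec v))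
        ≤ euclNorm (P (H.mulVec (P v))) + euclNorm (P (H.mulVec (v - P v))) := by
      rw [hdec]
      exact euclNorm_add_le _ _
    have c4 : euclNorm (P (H.mulVec (P v))) ≤ rhoL H Lc := by
      rw [e1]
      calc euclNorm (A.mulVec w) ≤ specRad A * euclNorm w := herm_mulVec_norm_le hAH w
        _ ≤ rhoL H Lc * euclNorm w := by
            apply mul_le_mul_of_nonneg_right hA_le
            rw [e2]; exact Real.sqrt_nonneg _
        _ ≤ rhoL H Lc * 1 := by
            apply mul_le_mul_of_nonneg_left _ hrho_nonneg
            rw [e2]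
            exact Real.sqrt_le_one.mpr hsS_le
        _ = rhoL H Lc := mul_one _
    have c5 : euclNorm (P (H.mulVec (v - P v))) ≤ Real.sqrt η * matOpNorm H := by
      calc euclNorm (P (H.mulVec (v - P v))) ≤ euclNorm (H.mulVec (v - P v)) := hPle _
        _ ≤ matOpNorm H * euclNorm (v - P v) := euclNorm_mulVec_le _ _
        _ ≤ matOpNorm H * Real.sqrt η := mul_le_mul_of_nonneg_left hb hopnn
        _ = Real.sqrt η * matOpNorm H := mul_comm _ _
    calc |lam| * Real.sqrt (1 - η) ≤ |lam| * Real.sqrt sS := c1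
      _ = euclNorm ((lam : ℂ) • P v) := c2
      _ = euclNorm (P (H.mulVec v)) := by rw [c2']
      _ ≤ _ := c3
      _ ≤ rhoL H Lc + Real.sqrt η * matOpNorm H := add_le_add c4 c5
  rw [le_div_iff₀ (Real.sqrt_pos.mpr h1η)]
  exact hchain


end
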